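/- For every n ≥ 1 and every almost-sure winning strategy σ for Reach({target}) in the POMDP F(n), the probability under σ of reaching the state target within the first p*_n steps is at most (1/2)·(1/2)^{p*_n}, where p*_n = ∏_{i=1}^n p(i) is the product of the first n primes. -/

import Mathlib

open Finset Filter
open scoped Classical

noncomputable section

/-- A finite history of a play: the current state together with the
(reversed) list of past steps; an entry `(a, s')` means: the action `a`
was taken from the state `s'` (leading to the next recorded state). -/
abbrev Hist (S A : Type) := S × List (A × S)

/-- The observation–action sequence of a history. -/
def obsHist {S A Z : Type} (O : S → Z) (h : Hist S A) : Z × List (A × Z) :=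
  (O h.1, h.2.map fun p => (p.1, O p.2))

/-- An observation-based (randomized, history-dependent) strategy. -/
structure Strategy (S A Z : Type) [Fintype A] (O : S → Z) where
  act : Hist S A → A → ℝ
  act_nonneg : ∀ h a, 0 ≤ act h a
  act_sum : ∀ h, ∑ a, act h a = 1
  obsBased : ∀ h h', obsHist O h = obsHist O h' → act h = act h'

/-- A partially observable Markov decision process. -/
structure POMDP (S A Z : Type) [Fintype S] [Fintype A] [Fintype Z] where
  δ : S → A → S → ℝ
  δ_nonneg : ∀ s a s', 0 ≤ δ s a s'
  δ_sum : ∀ s a, ∑ s', δ s a s' = 1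
  obs : S → Z
  init : S → ℝ
  init_nonneg : ∀ s, 0 ≤ init s
  init_sum : ∑ s, init s = 1
  init_obs : ∀ s s', 0 < init s → 0 < init s' → obs s = obs s'

namespace POMDP

variable {S A Z : Type} [Fintype S] [Fintype A] [Fintype Z]

/-- The target set `T` consists of absorbing states. -/
def Absorbing (M : POMDP S A Z) (T : Set S) : Prop :=
  ∀ t ∈ T, ∀ a, M.δ t a t = 1

/-- Probability that after `n` steps the process has followed exactly the
history `(s, l)` (so `l` has length `n`). -/
def hprobAux (M : POMDP S A Z) (σ : Strategy S A Z M.obs) : ℕ → S → List (A × S) → ℝ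
  | 0, s, l => if l = [] then M.init s else 0
  | n+1, s, l =>
    match l with
    | [] => 0
    | (a, s') :: rest => hprobAux M σ n s' rest * σ.act (s', rest) a * M.δ s' a s

def hprob (M : POMDP S A Z) (σ : Strategy S A Z M.obs) (n : ℕ) (h : Hist S A) : ℝ :=
  M.hprobAux σ n h.1 h.2

/-- The state sequence of a history visits the set `T`. -/
def visitsT (T : Set S) (h : Hist S A) : Prop :=
  h.1 ∈ T ∨ ∃ p ∈ h.2, p.2 ∈ T

/-- Probability of reaching `T` within the first `n` steps. -/
def probReachBy (M : POMDP S A Z) (T : Set S) (σ : Strategy S A Z M.obs) (n : ℕ) : ℝ :=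
  ∑' h : Hist S A, if visitsT T h then M.hprob σ n h else 0

/-- Probability of the reachability objective `Reach(T)`. -/
def probReach (M : POMDP S A Z) (T : Set S) (σ : Strategy S A Z M.obs) : ℝ :=
  ⨆ n, M.probReachBy T σ n

/-- The strategy `σ` is almost-sure winning for `Reach(T)`. -/
def AlmostSure (M : POMDP S A Z) (T : Set S) (σ : Strategy S A Z M.obs) : Prop :=
  M.probReach T σ = 1

/-- Accumulated cost along a history. -/
def totalCostAux (c : S → A → ℝ) : S → List (A × S) → ℝ
  | _, [] => 0
  | _, (a, s') :: rest => totalCostAux c s' rest + c s' a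

def totalCostH (c : S → A → ℝ) (h : Hist S A) : ℝ := totalCostAux c h.1 h.2

/-- Expected total cost of the first `n` steps, i.e. `E[Total_{n-1}]`
(in particular `E[Total_k] = expTotalSteps M c σ (k+1)`). -/
def expTotalSteps (M : POMDP S A Z) (c : S → A → ℝ) (σ : Strategy S A Z M.obs) (n : ℕ) : ℝ :=
  ∑' h : Hist S A, M.hprob σ n h * totalCostH c h

/-- The value `Val(σ) = E[Total]` of a strategy, as the limit (limsup) of the
expected costs of the finite prefixes. -/
def Val (M : POMDP S A Z) (c : S → A → ℝ) (σ : Strategy S A Z M.obs) : EReal :=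
  Filter.limsup (fun n => ((M.expTotalSteps c σ n : ℝ) : EReal)) Filter.atTop

/-- `optCost`: the infimum of the values of almost-sure winning strategies. -/
def optCost (M : POMDP S A Z) (T : Set S) (c : S → A → ℝ) : EReal :=
  ⨅ σ : {σ : Strategy S A Z M.obs // M.AlmostSure T σ}, M.Val c σ.1

end POMDP

def dirac {X : Type} [DecidableEq X] (x : X) : X → ℝ := fun y => if y = x then 1 else 0

lemma dirac_nonneg {X : Type} [DecidableEq X] (x y : X) : 0 ≤ dirac x y := by
  unfold dirac; split_ifs <;> norm_num

lemma dirac_sum {X : Type} [Fintype X] [DecidableEq X] (x : X) : ∑ y, dirac x y = 1 := by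
  simp [dirac]

/-- The half-half mixture of the Dirac distributions at `x` and `y`. -/
def mix2 {X : Type} [DecidableEq X] (x y : X) : X → ℝ :=
  fun t => (if t = x then (1 : ℝ)/2 else 0) + (if t = y then (1 : ℝ)/2 else 0)

lemma mix2_nonneg {X : Type} [DecidableEq X] (x y t : X) : 0 ≤ mix2 x y t := by
  unfold mix2; split_ifs <;> norm_num

lemma mix2_sum {X : Type} [Fintype X] [DecidableEq X] (x y : X) : ∑ t, mix2 x y t = 1 := by
  unfold mix2
  rw [Finset.sum_add_distrib]
  simp
  norm_num

/-- `pr i` is the `(i+1)`-st prime number, i.e. `p(i+1)` in the paper. -/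
def pr (i : ℕ) : ℕ := Nat.nth Nat.Prime i

lemma pr_pos (i : ℕ) : 0 < pr i := (Nat.prime_nth_prime i).pos

/-- `p*_n`, the product of the first `n` primes. -/
def pstar (n : ℕ) : ℕ := ∏ i ∈ Finset.range n, pr i

/-- States of the POMDP `F(n)`: the loop states `q^i_j`, and
`s0 = inr 0`, `bad = inr 1`, `target = inr 2`. -/
abbrev FSt (n : ℕ) := (Σ i : Fin n, Fin (pr i)) ⊕ Fin 3

/-- Transition function of `F(n)`; the action `a` is `true`, `#` is `false`. -/
def Fδ (n : ℕ) : FSt n → Bool → FSt n → ℝ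
  | Sum.inr i, act =>
      if i = 0 then
        (if act then dirac (Sum.inr 1)
         else fun t =>
           match t with
           | Sum.inl ⟨_, j⟩ => if j.val = 0 then ((n : ℝ))⁻¹ else 0
           | Sum.inr _ => 0)
      else if i = 1 then dirac (Sum.inr 1) else dirac (Sum.inr 2)
  | Sum.inl ⟨i, j⟩, act =>
      if act then
        mix2 (Sum.inl ⟨i, ⟨(j.val + 1) % pr i, Nat.mod_lt _ j.pos⟩⟩) (Sum.inr 0)
      else if j.val = pr i - 1 then mix2 (Sum.inr 2) (Sum.inr 0)
      else dirac (Sum.inr 1)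

lemma Fδ_nonneg (n : ℕ) (st : FSt n) (act : Bool) (t : FSt n) : 0 ≤ Fδ n st act t := by
  rcases st with ⟨i, j⟩ | i <;> simp only [Fδ] <;> (try split_ifs) <;>
    first
      | exact mix2_nonneg _ _ _
      | exact dirac_nonneg _ _
      | (rcases t with ⟨i', j'⟩ | i' <;> simp only [] <;> (try split_ifs) <;> positivity)

lemma Fδ_unif_sum (n : ℕ) (hn : 0 < n) :
    (∑ t : FSt n, (fun t =>
      match t with
      | Sum.inl ⟨_, j⟩ => if j.val = 0 then ((n : ℝ))⁻¹ else 0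
      | Sum.inr _ => 0) t) = 1 := by
  rw [Fintype.sum_sum_type]
  have h2 : ∑ i : Fin 3, (0 : ℝ) = 0 := by simp
  have h1 : ∀ p : (Σ i : Fin n, Fin (pr i)),
      (match (Sum.inl p : FSt n) with
        | Sum.inl ⟨_, j⟩ => if j.val = 0 then ((n : ℝ))⁻¹ else 0
        | Sum.inr _ => (0:ℝ)) = if p.2.val = 0 then ((n : ℝ))⁻¹ else 0 := by
    intro ⟨i, j⟩; rfl
  rw [Finset.sum_congr rfl fun p _ => h1 p]
  have h3 : ∑ p : (Σ i : Fin n, Fin (pr i)), (if p.2.val = 0 then ((n : ℝ))⁻¹ else 0) = 1 := by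
    rw [← Finset.univ_sigma_univ, Finset.sum_sigma]
    have hinner : ∀ i : Fin n,
        ∑ j : Fin (pr i), (if j.val = 0 then ((n : ℝ))⁻¹ else 0) = (n : ℝ)⁻¹ := by
      intro i
      rw [Fin.sum_univ_eq_sum_range (fun v => if v = 0 then ((n : ℝ))⁻¹ else 0)]
      rw [Finset.sum_ite_eq' (Finset.range (pr i)) 0]
      simp [pr_pos i]
    rw [Finset.sum_congr rfl fun i _ => hinner i]
    rw [Finset.sum_const, nsmul_eq_mul]
    simp only [Finset.card_univ, Fintype.card_fin]
    rw [mul_inv_cancel₀]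
    exact Nat.cast_ne_zero.mpr hn.ne'
  rw [h3]
  simp

lemma Fδ_sum (n : ℕ) (hn : 0 < n) (st : FSt n) (act : Bool) : ∑ t, Fδ n st act t = 1 := by
  rcases st with ⟨i, j⟩ | i <;> simp only [Fδ] <;> (try split_ifs) <;>
    first
      | exact mix2_sum _ _
      | exact dirac_sum _
      | exact Fδ_unif_sum n hn

/-- Observation function of `F(n)`: all loop states share the observation `0`;
`s0`, `bad`, `target` have their own observations `1`, `2`, `3`. -/
def Fobs (n : ℕ) : FSt n → Fin 4
  | Sum.inl _ => 0
  | Sum.inr i => i.succ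

/-- The POMDP `F(n)`. -/
def FPOMDP (n : ℕ) (hn : 0 < n) : POMDP (FSt n) Bool (Fin 4) where
  δ := Fδ n
  δ_nonneg := Fδ_nonneg n
  δ_sum := Fδ_sum n hn
  obs := Fobs n
  init := dirac (Sum.inr 0)
  init_nonneg := dirac_nonneg _
  init_sum := dirac_sum _
  init_obs := by
    intro s s' hs hs'
    have h1 : s = Sum.inr 0 := by
      by_contra hc; simp [dirac, hc] at hs
    have h2 : s' = Sum.inr 0 := by
      by_contra hc; simp [dirac, hc] at hs'
    rw [h1, h2]

/-- The cost function of `F(n)`: every transition has cost `1` except the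
self-loops at `target`, which have cost `0`. -/
def Fcost (n : ℕ) : FSt n → Bool → ℝ :=
  fun st _ => if st = Sum.inr 2 then 0 else 1

/-- The target set of `F(n)`. -/
def FTarget (n : ℕ) : Set (FSt n) := {Sum.inr 2}

section Helper
set_option linter.unusedSectionVars false

open Mathlib

variable {S A Z : Type} [Fintype S] [Fintype A] [Fintype Z]

namespace POMDP

variable (M : POMDP S A Z) (σ : Strategy S A Z M.obs)

lemma hprobAux_nonneg (m : ℕ) (s : S) (l : List (A × S)) : 0 ≤ M.hprobAux σ m s l := by
  induction l generalizing m s with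
  | nil =>
    cases m with
    | zero => unfold hprobAux; split_ifs; exacts [M.init_nonneg s, le_refl 0]
    | succ m => exact le_refl 0
  | cons p rest ih =>
    cases m with
    | zero => unfold hprobAux; split_ifs <;> simp_all [M.init_nonneg s]
    | succ m =>
      obtain ⟨a, s'⟩ := p
      show 0 ≤ M.hprobAux σ m s' rest * σ.act (s', rest) a * M.δ s' a s
      exact mul_nonneg (mul_nonneg (ih m s') (σ.act_nonneg _ a)) (M.δ_nonneg _ _ _)

lemma hprob_nonneg (m : ℕ) (h : Hist S A) : 0 ≤ M.hprob σ m h :=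
  hprobAux_nonneg M σ m h.1 h.2

lemma hprobAux_length (m : ℕ) (s : S) (l : List (A × S)) (hne : M.hprobAux σ m s l ≠ 0) :
    l.length = m := by
  induction l generalizing m s with
  | nil =>
    cases m with
    | zero => rfl
    | succ m => exact absurd rfl hne
  | cons p rest ih =>
    cases m with
    | zero =>
      unfold hprobAux at hne; simp at hne
    | succ m =>
      obtain ⟨a, s'⟩ := p
      have hstep : M.hprobAux σ (m+1) s ((a, s') :: rest) =
          M.hprobAux σ m s' rest * σ.act (s', rest) a * M.δ s' a s := rfl
      rw [hstep] at hne
      have h1 : M.hprobAux σ m s' rest ≠ 0 := fun h0 => hne (by rw [h0]; ring)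
      simp [ih m s' h1]

/-- The history encoded by a state together with a vector of steps. -/
def hvec {m : ℕ} (x : S × List.Vector (A × S) m) : Hist S A := (x.1, x.2.toList)

lemma hvec_injective (m : ℕ) : Function.Injective (hvec (S := S) (A := A) (m := m)) := by
  rintro ⟨s, v⟩ ⟨s', v'⟩ h
  simp only [hvec, Prod.mk.injEq] at h
  exact Prod.ext h.1 (List.Vector.toList_injective h.2)

lemma tsum_eq_hvec_sum (m : ℕ) (f : Hist S A → ℝ) (hf : ∀ h, f h ≠ 0 → h.2.length = m) :
    ∑' h : Hist S A, f h = ∑ x : S × List.Vector (A × S) m, f (hvec x) := by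
  rw [tsum_eq_sum (s := Finset.univ.image (hvec (m := m)))
    (fun h hh => by
      by_contra hne
      exact hh (Finset.mem_image.2 ⟨(h.1, ⟨h.2, hf h hne⟩), Finset.mem_univ _, rfl⟩)),
    Finset.sum_image (fun x _ y _ hxy => hvec_injective m hxy)]

/-- One-step extension equivalence. -/
def stepEquiv (m : ℕ) : (S × A) × (S × List.Vector (A × S) m) ≃ S × List.Vector (A × S) (m+1) where
  toFun := fun y => (y.1.1, (y.1.2, y.2.1) ::ᵥ y.2.2)
  invFun := fun x => ((x.1, x.2.head.1), (x.2.head.2, x.2.tail))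
  left_inv := by rintro ⟨⟨s, a⟩, ⟨s', v⟩⟩; simp
  right_inv := by rintro ⟨s, v⟩; simp [List.Vector.cons_head_tail]

lemma hprob_step (m : ℕ) (y : (S × A) × (S × List.Vector (A × S) m)) :
    M.hprob σ (m+1) (hvec (stepEquiv m y)) =
      M.hprob σ m (hvec y.2) * σ.act (hvec y.2) y.1.2 * M.δ y.2.1 y.1.2 y.1.1 := by
  obtain ⟨⟨s, a⟩, ⟨s', v⟩⟩ := y
  show M.hprobAux σ (m+1) s (((a, s') ::ᵥ v).toList) = _
  rw [List.Vector.toList_cons]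
  rfl

lemma sum_hprob (m : ℕ) : ∑ x : S × List.Vector (A × S) m, M.hprob σ m (hvec x) = 1 := by
  induction m with
  | zero =>
    rw [Fintype.sum_prod_type]
    have : ∀ (s : S) (v : List.Vector (A × S) 0), M.hprob σ 0 (hvec (s, v)) = M.init s := by
      intro s v
      show M.hprobAux σ 0 s v.toList = M.init s
      rw [List.Vector.toList_empty]; rfl
    simp only [this]
    have hcard : (Finset.univ : Finset (List.Vector (A × S) 0)).card = 1 := by
      simp [Finset.card_univ]
    simp [Finset.sum_const, hcard, M.init_sum]
  | succ m ih =>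
    rw [← Equiv.sum_comp (stepEquiv m) (fun x => M.hprob σ (m+1) (hvec x))]
    have : ∀ y : (S × A) × (S × List.Vector (A × S) m),
        M.hprob σ (m+1) (hvec (stepEquiv m y)) =
          M.hprob σ m (hvec y.2) * σ.act (hvec y.2) y.1.2 * M.δ y.2.1 y.1.2 y.1.1 :=
      hprob_step M σ m
    rw [Finset.sum_congr rfl (fun y _ => this y)]
    rw [Fintype.sum_prod_type, Finset.sum_comm]
    have inner : ∀ x : S × List.Vector (A × S) m,
        ∑ sa : S × A, M.hprob σ m (hvec x) * σ.act (hvec x) sa.2 * M.δ x.1 sa.2 sa.1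
          = M.hprob σ m (hvec x) := by
      intro x
      rw [Fintype.sum_prod_type_right]
      have : ∀ a : A, ∑ s : S, M.hprob σ m (hvec x) * σ.act (hvec x) a * M.δ x.1 a s
          = M.hprob σ m (hvec x) * σ.act (hvec x) a := by
        intro a
        rw [← Finset.mul_sum, M.δ_sum, mul_one]
      rw [Finset.sum_congr rfl (fun a _ => this a), ← Finset.mul_sum, σ.act_sum, mul_one]
    rw [Finset.sum_congr rfl (fun x _ => inner x), ih]

/-- The mass at horizon `m` of histories satisfying `P`. -/
def psum (P : Hist S A → Prop) (m : ℕ) : ℝ :=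
  ∑ x : S × List.Vector (A × S) m, if P (hvec x) then M.hprob σ m (hvec x) else 0

lemma psum_nonneg (P : Hist S A → Prop) (m : ℕ) : 0 ≤ M.psum σ P m :=
  Finset.sum_nonneg fun x _ => by
    split_ifs
    · exact hprob_nonneg M σ m _
    · exact le_refl 0

lemma probReachBy_eq_psum (T : Set S) (m : ℕ) :
    M.probReachBy T σ m = M.psum σ (visitsT T) m := by
  refine tsum_eq_hvec_sum m _ (fun h hne => ?_)
  refine M.hprobAux_length σ m h.1 h.2 (fun h0 => hne ?_)
  simp [hprob, h0]

/-- `psum` is monotone for predicates closed under history extension. -/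
lemma psum_mono_succ (P : Hist S A → Prop)
    (hP : ∀ (h : Hist S A) (a : A) (s : S), P h → P (s, (a, h.1) :: h.2)) (m : ℕ) :
    M.psum σ P m ≤ M.psum σ P (m+1) := by
  have key : ∀ (x : S × List.Vector (A × S) m) (sa : S × A),
      (if P (hvec x) then M.hprob σ m (hvec x) else 0) * σ.act (hvec x) sa.2 * M.δ x.1 sa.2 sa.1
        ≤ (if P (hvec (stepEquiv m (sa, x))) then
            M.hprob σ (m+1) (hvec (stepEquiv m (sa, x))) else 0) := by
    intro x sa
    rw [hprob_step M σ m (sa, x)]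
    by_cases hp : P (hvec x)
    · have hp' : P (hvec (stepEquiv m (sa, x))) := hP (hvec x) sa.2 sa.1 hp
      simp only [hp, hp', if_true]
      exact le_refl _
    · simp only [hp, if_false, zero_mul]
      split_ifs
      · exact mul_nonneg (mul_nonneg (hprob_nonneg M σ m _) (σ.act_nonneg _ _))
          (M.δ_nonneg _ _ _)
      · exact le_refl 0
  calc M.psum σ P m
      = ∑ x : S × List.Vector (A × S) m, ∑ sa : S × A,
          (if P (hvec x) then M.hprob σ m (hvec x) else 0)
            * σ.act (hvec x) sa.2 * M.δ x.1 sa.2 sa.1 := by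
        refine Finset.sum_congr rfl (fun x _ => ?_)
        rw [Fintype.sum_prod_type_right]
        have hin : ∀ a : A, ∑ s : S,
            (if P (hvec x) then M.hprob σ m (hvec x) else 0) * σ.act (hvec x) a * M.δ x.1 a s
              = (if P (hvec x) then M.hprob σ m (hvec x) else 0) * σ.act (hvec x) a :=
          fun a => by rw [← Finset.mul_sum, M.δ_sum, mul_one]
        rw [Finset.sum_congr rfl fun a _ => hin a, ← Finset.mul_sum, σ.act_sum, mul_one]
    _ ≤ ∑ x : S × List.Vector (A × S) m, ∑ sa : S × A,
          (if P (hvec (stepEquiv m (sa, x))) then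
            M.hprob σ (m+1) (hvec (stepEquiv m (sa, x))) else 0) :=
        Finset.sum_le_sum (fun x _ => Finset.sum_le_sum (fun sa _ => key x sa))
    _ = ∑ y : (S × A) × (S × List.Vector (A × S) m),
          (if P (hvec (stepEquiv m y)) then M.hprob σ (m+1) (hvec (stepEquiv m y)) else 0) := by
      rw [Finset.sum_comm]
      exact (Fintype.sum_prod_type (f := fun y : (S × A) × (S × List.Vector (A × S) m) =>
        if P (hvec (stepEquiv m y)) then M.hprob σ (m+1) (hvec (stepEquiv m y)) else 0)).symm
    _ = M.psum σ P (m+1) :=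
      Equiv.sum_comp (stepEquiv m)
        (fun x => if P (hvec x) then M.hprob σ (m+1) (hvec x) else 0)

lemma psum_mono (P : Hist S A → Prop)
    (hP : ∀ (h : Hist S A) (a : A) (s : S), P h → P (s, (a, h.1) :: h.2)) :
    Monotone (M.psum σ P) :=
  monotone_nat_of_le_succ (M.psum_mono_succ σ P hP)

/-- Disjoint events have total mass at most one. -/
lemma psum_add_le_one (P Q : Hist S A → Prop)
    (hPQ : ∀ h : Hist S A, ∀ m', M.hprob σ m' h ≠ 0 → ¬(P h ∧ Q h)) (m : ℕ) :
    M.psum σ P m + M.psum σ Q m ≤ 1 := by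
  rw [← M.sum_hprob σ m]
  unfold psum
  rw [← Finset.sum_add_distrib]
  refine Finset.sum_le_sum (fun x _ => ?_)
  by_cases h0 : M.hprob σ m (hvec x) = 0
  · rw [h0]; split_ifs <;> simp
  · have := hPQ (hvec x) m h0
    have hnn := hprob_nonneg M σ m (hvec x)
    by_cases hp : P (hvec x) <;> by_cases hq : Q (hvec x) <;> simp_all

lemma visitsT_extend (T : Set S) (h : Hist S A) (a : A) (s : S) (hv : visitsT T h) :
    visitsT T (s, (a, h.1) :: h.2) := by
  rcases hv with h1 | ⟨p, hp, hp2⟩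
  · exact Or.inr ⟨(a, h.1), List.mem_cons_self, h1⟩
  · exact Or.inr ⟨p, List.mem_cons_of_mem _ hp, hp2⟩

/-- A single history gives a lower bound on `psum`. -/
lemma le_psum (P : Hist S A → Prop) (m : ℕ) (x : S × List.Vector (A × S) m)
    (hx : P (hvec x)) : M.hprob σ m (hvec x) ≤ M.psum σ P m := by
  unfold psum
  have := Finset.single_le_sum (f := fun y : S × List.Vector (A × S) m =>
    if P (hvec y) then M.hprob σ m (hvec y) else 0)
    (fun y _ => by beta_reduce; split_ifs; exacts [hprob_nonneg M σ m _, le_refl 0])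
    (Finset.mem_univ x)
  simpa [hx] using this

/-- Useful step-unfolding for `hprob`. -/
lemma hprob_cons (m : ℕ) (s : S) (a : A) (s' : S) (rest : List (A × S)) :
    M.hprob σ (m+1) (s, (a, s') :: rest) =
      M.hprob σ m (s', rest) * σ.act (s', rest) a * M.δ s' a s := rfl

lemma hprob_zero_cons (s : S) (a : A) (s' : S) (rest : List (A × S)) :
    M.hprob σ 0 (s, (a, s') :: rest) = 0 := by
  simp [hprob, hprobAux]

lemma visitsT_cons_elim {T : Set S} {s s' : S} {a : A} {rest : List (A × S)}
    (h : visitsT T (s, (a, s') :: rest)) : s ∈ T ∨ visitsT T (s', rest) := by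
  rcases h with h1 | ⟨p, hp, hp2⟩
  · exact Or.inl h1
  · rcases List.mem_cons.1 hp with rfl | hp'
    · exact Or.inr (Or.inl hp2)
    · exact Or.inr (Or.inr ⟨p, hp', hp2⟩)

/-- If `v` is absorbing (in the support sense) then any positive-probability
history visiting `v` ends in `v`. -/
lemma final_absorbing (v : S)
    (habs : ∀ (a : A) (t : S), M.δ v a t ≠ 0 → t = v) :
    ∀ (l : List (A × S)) (m : ℕ) (s : S), M.hprob σ m (s, l) ≠ 0 →
      visitsT {v} (s, l) → s = v := by
  intro l
  induction l with
  | nil =>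
    intro m s _ hv
    rcases hv with h1 | ⟨p, hp, _⟩
    · exact h1
    · simp at hp
  | cons p rest ih =>
    intro m s hne hv
    obtain ⟨a, s'⟩ := p
    cases m with
    | zero => rw [hprob_zero_cons] at hne; exact absurd rfl hne
    | succ m =>
      rw [hprob_cons] at hne
      obtain ⟨h12, h3⟩ := mul_ne_zero_iff.1 hne
      obtain ⟨h1, _⟩ := mul_ne_zero_iff.1 h12
      rcases visitsT_cons_elim hv with hs | hv'
      · exact hs
      · have hs' : s' = v := ih m s' h1 hv'
        exact habs a s (hs' ▸ h3)

end POMDP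
end Helper
section FHelper
set_option linter.unusedSectionVars false
open Mathlib POMDP

lemma dirac_ne_zero' {X : Type} [DecidableEq X] {x y : X} (h : dirac x y ≠ 0) : y = x := by
  by_contra hc; simp [dirac, hc] at h

lemma dirac_self {X : Type} [DecidableEq X] (x : X) : dirac x x = 1 := by simp [dirac]

lemma mix2_ne_zero' {X : Type} [DecidableEq X] {x y t : X} (h : mix2 x y t ≠ 0) :
    t = x ∨ t = y := by
  by_contra hc
  push_neg at hc
  simp [mix2, hc.1, hc.2] at h

lemma mix2_fst_ne_zero' {X : Type} [DecidableEq X] (x y : X) : mix2 x y x ≠ 0 := by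
  have he : mix2 x y x = 1/2 + if x = y then (1:ℝ)/2 else 0 := by simp [mix2]
  rw [he]; split_ifs <;> norm_num

variable {n : ℕ}

lemma Fδ_inl_true {i : Fin n} {j : Fin (pr i)} {t : FSt n}
    (h : Fδ n (Sum.inl ⟨i, j⟩) true t ≠ 0) :
    t = Sum.inl ⟨i, ⟨(j.val + 1) % pr i, Nat.mod_lt _ j.pos⟩⟩ ∨ t = Sum.inr 0 := by
  have he : Fδ n (Sum.inl ⟨i, j⟩) true t
      = mix2 (Sum.inl ⟨i, ⟨(j.val + 1) % pr i, Nat.mod_lt _ j.pos⟩⟩) (Sum.inr 0) t := by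
    simp [Fδ]
  exact mix2_ne_zero' (he ▸ h)

lemma Fδ_inl_false_top {i : Fin n} {j : Fin (pr i)} (hj : j.val = pr i - 1) {t : FSt n}
    (h : Fδ n (Sum.inl ⟨i, j⟩) false t ≠ 0) :
    t = Sum.inr 2 ∨ t = Sum.inr 0 := by
  have he : Fδ n (Sum.inl ⟨i, j⟩) false t = mix2 (Sum.inr 2) (Sum.inr 0) t := by
    simp [Fδ, hj]
  exact mix2_ne_zero' (he ▸ h)

lemma Fδ_inl_false_nottop {i : Fin n} {j : Fin (pr i)} (hj : j.val ≠ pr i - 1) {t : FSt n}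
    (h : Fδ n (Sum.inl ⟨i, j⟩) false t ≠ 0) : t = Sum.inr 1 := by
  have he : Fδ n (Sum.inl ⟨i, j⟩) false t = dirac (Sum.inr 1) t := by
    simp [Fδ, hj]
  exact dirac_ne_zero' (he ▸ h)

lemma Fδ_inr0_true {t : FSt n} (h : Fδ n (Sum.inr 0) true t ≠ 0) : t = Sum.inr 1 := by
  have he : Fδ n (Sum.inr 0) true t = dirac (Sum.inr 1) t := by simp [Fδ]
  exact dirac_ne_zero' (he ▸ h)

lemma Fδ_inr1 {a : Bool} {t : FSt n} (h : Fδ n (Sum.inr 1) a t ≠ 0) : t = Sum.inr 1 := by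
  have he : Fδ n (Sum.inr 1) a t = dirac (Sum.inr 1) t := by simp [Fδ]
  exact dirac_ne_zero' (he ▸ h)

lemma Fδ_inr2 {a : Bool} {t : FSt n} (h : Fδ n (Sum.inr 2) a t ≠ 0) : t = Sum.inr 2 := by
  have he : Fδ n (Sum.inr 2) a t = dirac (Sum.inr 2) t := by simp [Fδ]
  exact dirac_ne_zero' (he ▸ h)

lemma Fδ_inr0_false {t : FSt n} (h : Fδ n (Sum.inr 0) false t ≠ 0) :
    ∃ (i : Fin n) (j : Fin (pr i)), t = Sum.inl ⟨i, j⟩ ∧ j.val = 0 := by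
  rcases t with ⟨i, j⟩ | c
  · refine ⟨i, j, rfl, ?_⟩
    by_contra hc
    have he : Fδ n (Sum.inr 0) false (Sum.inl ⟨i, j⟩ : FSt n) = 0 := by simp [Fδ, hc]
    exact h he
  · exact absurd (by simp [Fδ] : Fδ n (Sum.inr 0) false (Sum.inr c : FSt n) = 0) h

lemma Fδ_entry (hn : 0 < n) (i : Fin n) (j : Fin (pr i)) (hj : j.val = 0) :
    Fδ n (Sum.inr 0) false (Sum.inl ⟨i, j⟩) ≠ 0 := by
  have he : Fδ n (Sum.inr 0) false (Sum.inl ⟨i, j⟩ : FSt n) = ((n : ℝ))⁻¹ := by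
    simp [Fδ, hj]
  rw [he]
  exact inv_ne_zero (Nat.cast_ne_zero.2 hn.ne')

lemma Fδ_step_a (i : Fin n) (j : Fin (pr i)) :
    Fδ n (Sum.inl ⟨i, j⟩) true (Sum.inl ⟨i, ⟨(j.val + 1) % pr i, Nat.mod_lt _ j.pos⟩⟩) ≠ 0 := by
  have he : Fδ n (Sum.inl ⟨i, j⟩) true (Sum.inl ⟨i, ⟨(j.val + 1) % pr i, Nat.mod_lt _ j.pos⟩⟩)
      = mix2 (Sum.inl ⟨i, ⟨(j.val + 1) % pr i, Nat.mod_lt _ j.pos⟩⟩ : FSt n) (Sum.inr 0)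
          (Sum.inl ⟨i, ⟨(j.val + 1) % pr i, Nat.mod_lt _ j.pos⟩⟩) := by simp [Fδ]
  rw [he]
  exact mix2_fst_ne_zero' _ _

lemma Fδ_to_bad (i : Fin n) (j : Fin (pr i)) (hj : j.val ≠ pr i - 1) :
    Fδ n (Sum.inl ⟨i, j⟩) false (Sum.inr 1) ≠ 0 := by
  have he : Fδ n (Sum.inl ⟨i, j⟩) false (Sum.inr 1 : FSt n) = dirac (Sum.inr 1 : FSt n) (Sum.inr 1) := by
    simp [Fδ, hj]
  rw [he, dirac_self]
  norm_num

end FHelper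
section FMain
set_option linter.unusedSectionVars false
open Mathlib POMDP

variable {n : ℕ}

lemma Fobs_inl (p : Σ i : Fin n, Fin (pr i)) : Fobs n (Sum.inl p) = 0 := rfl

/-- The companion lemma: a positive-probability history ending in a loop state
determines a phase `k`, and for every loop there is an observation-equivalent
positive-probability history ending in that loop at phase `k`. -/
lemma companion (hn : 0 < n) (σ : Strategy (FSt n) Bool (Fin 4) (FPOMDP n hn).obs) :
    ∀ (l : List (Bool × FSt n)) (m : ℕ) (i : Fin n) (j : Fin (pr i)),
      (FPOMDP n hn).hprob σ m (Sum.inl ⟨i, j⟩, l) ≠ 0 →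
      ∃ k : ℕ, k < m ∧ j.val = k % pr i ∧
        ∀ i' : Fin n, ∃ l' : List (Bool × FSt n),
          (FPOMDP n hn).hprob σ m (Sum.inl ⟨i', ⟨k % pr i', Nat.mod_lt _ (pr_pos i')⟩⟩, l') ≠ 0 ∧
          obsHist (Fobs n) (Sum.inl ⟨i', ⟨k % pr i', Nat.mod_lt _ (pr_pos i')⟩⟩, l') =
            obsHist (Fobs n) (Sum.inl ⟨i, j⟩, l) := by
  intro l
  induction l with
  | nil =>
    intro m i j hne
    cases m with
    | zero =>
      exfalso
      apply hne
      show dirac (Sum.inr 0 : FSt n) (Sum.inl ⟨i, j⟩) = 0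
      simp [dirac]
    | succ m => exact absurd rfl hne
  | cons p rest ih =>
    intro m i j hne
    obtain ⟨a, s'⟩ := p
    cases m with
    | zero => rw [hprob_zero_cons] at hne; exact absurd rfl hne
    | succ m =>
      rw [hprob_cons] at hne
      obtain ⟨h12, h3⟩ := mul_ne_zero_iff.1 hne
      obtain ⟨h1, h2⟩ := mul_ne_zero_iff.1 h12
      have h3' : Fδ n s' a (Sum.inl ⟨i, j⟩) ≠ 0 := h3
      rcases s' with ⟨i2, j2⟩ | c
      · -- from a loop state; only action `a` (= true) is possible
        cases a with
        | false =>
          exfalso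
          by_cases hj2 : j2.val = pr i2 - 1
          · rcases Fδ_inl_false_top hj2 h3' with heq | heq <;> exact nomatch heq
          · exact nomatch (Fδ_inl_false_nottop hj2 h3')
        | true =>
          rcases Fδ_inl_true h3' with heq | heq
          swap
          · exact nomatch heq
          obtain ⟨hi, hj⟩ := Sigma.mk.inj_iff.1 (Sum.inl.inj heq)
          subst hi
          have hj' : j = ⟨(j2.val + 1) % pr i, Nat.mod_lt _ j2.pos⟩ := eq_of_heq hj
          obtain ⟨k2, hk2m, hk2, hcomp⟩ := ih m i j2 h1
          refine ⟨k2 + 1, by omega, ?_, ?_⟩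
          · rw [hj']
            show (j2.val + 1) % pr i = (k2 + 1) % pr i
            rw [hk2, Nat.mod_add_mod]
          · intro i'
            obtain ⟨l', hl'ne, hl'obs⟩ := hcomp i'
            set e2 : FSt n := Sum.inl ⟨i', ⟨k2 % pr i', Nat.mod_lt _ (pr_pos i')⟩⟩ with he2
            refine ⟨(true, e2) :: l', ?_, ?_⟩
            · rw [hprob_cons]
              refine mul_ne_zero (mul_ne_zero hl'ne ?_) ?_
              · have hact : σ.act (e2, l') true = σ.act (Sum.inl ⟨i, j2⟩, rest) true := by
                  have := σ.obsBased (e2, l') (Sum.inl ⟨i, j2⟩, rest) hl'obs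
                  rw [this]
                rw [hact]; exact h2
              · have hfin : (⟨(k2 % pr i' + 1) % pr i', Nat.mod_lt _ (pr_pos i')⟩ : Fin (pr i'))
                    = ⟨(k2 + 1) % pr i', Nat.mod_lt _ (pr_pos i')⟩ := by
                  apply Fin.ext
                  show (k2 % pr i' + 1) % pr i' = (k2 + 1) % pr i'
                  rw [Nat.mod_add_mod]
                have := Fδ_step_a i' (⟨k2 % pr i', Nat.mod_lt _ (pr_pos i')⟩ : Fin (pr i'))
                rw [hfin] at this
                exact this
            · simp only [obsHist, List.map_cons]
              have hmap := congrArg Prod.snd hl'obs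
              simp only [obsHist] at hmap
              rw [hmap]
              rfl
      · -- from an `inr` state: must be `s0` with action `#`
        fin_cases c
        · cases a with
          | true => exact nomatch (Fδ_inr0_true h3')
          | false =>
            obtain ⟨i0, j0, heq, hj0⟩ := Fδ_inr0_false h3'
            obtain ⟨hi, hj⟩ := Sigma.mk.inj_iff.1 (Sum.inl.inj heq)
            subst hi
            have hj' : j = j0 := eq_of_heq hj
            refine ⟨0, by omega, ?_, ?_⟩
            · rw [hj', hj0]; simp
            · intro i'
              refine ⟨(false, Sum.inr 0) :: rest, ?_, ?_⟩
              · rw [hprob_cons]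
                refine mul_ne_zero (mul_ne_zero h1 h2) ?_
                exact Fδ_entry hn i' ⟨0 % pr i', Nat.mod_lt _ (pr_pos i')⟩ (Nat.zero_mod _)
              · rfl
        · exact nomatch (Fδ_inr1 h3')
        · exact nomatch (Fδ_inr2 h3')

end FMain
section FMain2
set_option linter.unusedSectionVars false
open Mathlib POMDP

variable {n : ℕ}

/-- Any positive-probability history reaching `target` must at some earlier
point have been at the top of a loop with the strategy giving positive
probability to `#`. -/
lemma exists_unsafe (hn : 0 < n) (σ : Strategy (FSt n) Bool (Fin 4) (FPOMDP n hn).obs) :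
    ∀ (l : List (Bool × FSt n)) (m : ℕ) (s : FSt n),
      (FPOMDP n hn).hprob σ m (s, l) ≠ 0 → visitsT (FTarget n) (s, l) →
      ∃ (m' : ℕ) (i : Fin n) (j : Fin (pr i)) (l₀ : List (Bool × FSt n)),
        m' < m ∧ j.val = pr i - 1 ∧
        (FPOMDP n hn).hprob σ m' (Sum.inl ⟨i, j⟩, l₀) ≠ 0 ∧
        σ.act (Sum.inl ⟨i, j⟩, l₀) false ≠ 0 := by
  intro l
  induction l with
  | nil =>
    intro m s hne hv
    exfalso
    have hs : s = Sum.inr 2 := by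
      rcases hv with h1 | ⟨p, hp, _⟩
      · exact h1
      · simp at hp
    cases m with
    | zero =>
      apply hne
      show dirac (Sum.inr 0 : FSt n) s = 0
      rw [hs]
      simp [dirac]
    | succ m => exact hne rfl
  | cons p rest ih =>
    intro m s hne hv
    obtain ⟨a, s'⟩ := p
    cases m with
    | zero => rw [hprob_zero_cons] at hne; exact absurd rfl hne
    | succ m =>
      rw [hprob_cons] at hne
      obtain ⟨h12, h3⟩ := mul_ne_zero_iff.1 hne
      obtain ⟨h1, h2⟩ := mul_ne_zero_iff.1 h12
      have h3' : Fδ n s' a s ≠ 0 := h3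
      rcases visitsT_cons_elim hv with hs | hv'
      · -- the final state is `target`
        have hs2 : s = Sum.inr 2 := hs
        subst hs2
        rcases s' with ⟨i, j⟩ | c
        · cases a with
          | true =>
            exfalso
            rcases Fδ_inl_true h3' with heq | heq
            · exact nomatch heq
            · exact absurd (Sum.inr.inj heq) (by decide)
          | false =>
            by_cases hj : j.val = pr i - 1
            · exact ⟨m, i, j, rest, by omega, hj, h1, h2⟩
            · exact absurd (Sum.inr.inj (Fδ_inl_false_nottop hj h3')) (by decide)
        · fin_cases c
          · exfalso
            cases a with
            | true => exact absurd (Sum.inr.inj (Fδ_inr0_true h3')) (by decide)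
            | false =>
              obtain ⟨i0, j0, heq, _⟩ := Fδ_inr0_false h3'
              exact nomatch heq
          · exact absurd (Sum.inr.inj (Fδ_inr1 h3')) (by decide)
          · -- the previous state is already `target`
            obtain ⟨m', i, j, l₀, hlt, hj, hh, ha⟩ :=
              ih m (Sum.inr 2) h1 (Or.inl rfl)
            exact ⟨m', i, j, l₀, by omega, hj, hh, ha⟩
      · obtain ⟨m', i, j, l₀, hlt, hj, hh, ha⟩ := ih m s' h1 hv'
        exact ⟨m', i, j, l₀, by omega, hj, hh, ha⟩

end FMain2
/-- In `F(n)`, for every almost-sure winning strategy the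
probability of reaching `target` within the first `p*_n` steps is at most
`(1/2)·(1/2)^{p*_n}`. -/
theorem FPOMDP_reach_prob_le (n : ℕ) (hn : 0 < n)
    (σ : Strategy (FSt n) Bool (Fin 4) (FPOMDP n hn).obs)
    (hAS : (FPOMDP n hn).AlmostSure (FTarget n) σ) :
    (FPOMDP n hn).probReachBy (FTarget n) σ (pstar n) ≤
      (1 / 2) * (1 / 2 : ℝ) ^ pstar n := by
  rw [(FPOMDP n hn).probReachBy_eq_psum σ (FTarget n) (pstar n)]
  have hbound : (0:ℝ) ≤ (1/2) * (1/2:ℝ)^(pstar n) := by positivity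
  suffices h0 : (FPOMDP n hn).psum σ (POMDP.visitsT (FTarget n)) (pstar n) = 0 by rw [h0]; exact hbound
  by_contra hne0
  obtain ⟨x, _, hx⟩ := Finset.exists_ne_zero_of_sum_ne_zero hne0
  have hvT : POMDP.visitsT (FTarget n) (POMDP.hvec x) := by
    by_contra hc; simp [hc] at hx
  have hpx : (FPOMDP n hn).hprob σ (pstar n) (POMDP.hvec x) ≠ 0 := by
    intro hc; simp [hc] at hx
  -- find the unsafe moment
  obtain ⟨m', i, j, l₀, hm'lt, hjtop, hh₀, hact₀⟩ :=
    exists_unsafe hn σ x.2.toList (pstar n) x.1 hpx hvT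
  -- find the phase and the companion histories
  obtain ⟨k, hkm, hkj, hcomp⟩ := companion hn σ l₀ m' i j hh₀
  have hktop : k % pr i = pr i - 1 := hkj ▸ hjtop
  have hdvd_i : ∀ i' : Fin n, k % pr i' = pr i' - 1 → pr i' ∣ k + 1 := by
    intro i' hk'
    have hp := pr_pos i'
    have hdm := Nat.div_add_mod k (pr i')
    refine ⟨k / pr i' + 1, ?_⟩
    rw [Nat.mul_add, Nat.mul_one]
    omega
  -- not all loops are at the top
  have hnotall : ∃ i' : Fin n, k % pr i' ≠ pr i' - 1 := by
    by_contra hall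
    push_neg at hall
    have hdvdall : ∀ i' : Fin n, pr i' ∣ k + 1 := fun i' => hdvd_i i' (hall i')
    have hinj : ∀ a ∈ Finset.range n, ∀ b ∈ Finset.range n, pr a = pr b → a = b :=
      fun a _ b _ h => Nat.nth_injective Nat.infinite_setOf_prime h
    have hprodim : ∏ p ∈ (Finset.range n).image pr, p = pstar n :=
      Finset.prod_image hinj
    have hdvd : pstar n ∣ k + 1 := by
      rw [← hprodim]
      refine Finset.prod_primes_dvd _ (fun p hp => ?_) (fun p hp => ?_)
      · obtain ⟨a, _, rfl⟩ := Finset.mem_image.1 hp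
        exact (Nat.prime_nth_prime a).prime
      · obtain ⟨a, ha, rfl⟩ := Finset.mem_image.1 hp
        exact hdvdall ⟨a, Finset.mem_range.1 ha⟩
    have hle : pstar n ≤ k + 1 := Nat.le_of_dvd (Nat.succ_pos k) hdvd
    omega
  obtain ⟨i', hi'⟩ := hnotall
  obtain ⟨l', hl'ne, hl'obs⟩ := hcomp i'
  set e' : FSt n := Sum.inl ⟨i', ⟨k % pr i', Nat.mod_lt _ (pr_pos i')⟩⟩ with he'
  have hact' : σ.act (e', l') false ≠ 0 := by
    have := σ.obsBased (e', l') (Sum.inl ⟨i, j⟩, l₀) hl'obs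
    rw [this]
    exact hact₀
  -- the bad history
  have hbadne : (FPOMDP n hn).hprob σ (m' + 1) (Sum.inr 1, (false, e') :: l') ≠ 0 := by
    rw [(FPOMDP n hn).hprob_cons σ]
    exact mul_ne_zero (mul_ne_zero hl'ne hact')
      (Fδ_to_bad i' ⟨k % pr i', Nat.mod_lt _ (pr_pos i')⟩ hi')
  have hl'len : l'.length = m' := (FPOMDP n hn).hprobAux_length σ m' e' l' hl'ne
  set xbad : FSt n × List.Vector (Bool × FSt n) (m' + 1) :=
    (Sum.inr 1, ⟨(false, e') :: l', by simp [hl'len]⟩) with hxbad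
  have hxbad_eq : POMDP.hvec xbad = (Sum.inr 1, (false, e') :: l') := rfl
  set ε : ℝ := (FPOMDP n hn).hprob σ (m' + 1) (Sum.inr 1, (false, e') :: l') with hε
  have hεpos : 0 < ε := lt_of_le_of_ne (POMDP.hprob_nonneg (FPOMDP n hn) σ (m' + 1) _) (Ne.symm hbadne)
  -- events
  set P : Hist (FSt n) Bool → Prop := POMDP.visitsT (FTarget n) with hP
  set Q : Hist (FSt n) Bool → Prop := POMDP.visitsT {(Sum.inr 1 : FSt n)} with hQ
  have hPext : ∀ (h : Hist (FSt n) Bool) (a : Bool) (s : FSt n), P h → P (s, (a, h.1) :: h.2) :=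
    fun h a s hv => POMDP.visitsT_extend (FTarget n) h a s hv
  have hQext : ∀ (h : Hist (FSt n) Bool) (a : Bool) (s : FSt n), Q h → Q (s, (a, h.1) :: h.2) :=
    fun h a s hv => POMDP.visitsT_extend _ h a s hv
  have habs1 : ∀ (a : Bool) (t : FSt n), (FPOMDP n hn).δ (Sum.inr 1) a t ≠ 0 → t = Sum.inr 1 :=
    fun a t h => Fδ_inr1 (a := a) h
  have habs2 : ∀ (a : Bool) (t : FSt n), (FPOMDP n hn).δ (Sum.inr 2) a t ≠ 0 → t = Sum.inr 2 :=
    fun a t h => Fδ_inr2 (a := a) h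
  have hdisj : ∀ (h : Hist (FSt n) Bool) (m'' : ℕ), (FPOMDP n hn).hprob σ m'' h ≠ 0 → ¬(P h ∧ Q h) := by
    rintro ⟨s, l⟩ m'' hne ⟨hvP, hvQ⟩
    have hT : s = Sum.inr 2 := (FPOMDP n hn).final_absorbing σ (Sum.inr 2) habs2 l m'' s hne hvP
    have hB : s = Sum.inr 1 := (FPOMDP n hn).final_absorbing σ (Sum.inr 1) habs1 l m'' s hne hvQ
    rw [hT] at hB
    exact absurd (Sum.inr.inj hB) (by decide)
  -- the mass of bad histories is at least ε from time m'+1 on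
  have hεle : ε ≤ (FPOMDP n hn).psum σ Q (m' + 1) := by
    have hQbad : Q (POMDP.hvec xbad) := Or.inl rfl
    exact (FPOMDP n hn).le_psum σ Q (m' + 1) xbad hQbad
  -- hence the reachability mass never exceeds 1 - ε
  have hbnd : ∀ m : ℕ, (FPOMDP n hn).psum σ P m ≤ 1 - ε := by
    intro m
    have h1 : (FPOMDP n hn).psum σ P m ≤ (FPOMDP n hn).psum σ P (max m (m' + 1)) :=
      (FPOMDP n hn).psum_mono σ P hPext (le_max_left _ _)
    have h2 : (FPOMDP n hn).psum σ P (max m (m' + 1)) + (FPOMDP n hn).psum σ Q (max m (m' + 1)) ≤ 1 :=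
      (FPOMDP n hn).psum_add_le_one σ P Q hdisj _
    have h3 : ε ≤ (FPOMDP n hn).psum σ Q (max m (m' + 1)) :=
      le_trans hεle ((FPOMDP n hn).psum_mono σ Q hQext (le_max_right _ _))
    linarith
  have hsup : (FPOMDP n hn).probReach (FTarget n) σ ≤ 1 - ε := by
    refine ciSup_le (fun m => ?_)
    rw [(FPOMDP n hn).probReachBy_eq_psum σ (FTarget n) m]
    exact hbnd m
  rw [hAS] at hsup
  linarith
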